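/- Let 0 < t and let ε, ε' : Fin 3 → ℝ be sign vectors (values in {-1,1}) differing in exactly two coordinates. Then -⟨P t ε, P t ε'⟩ / √(⟨P t ε, P t ε⟩ · ⟨P t ε', P t ε'⟩) = (3t² - 1)/(1 + t²). In particular, for 0 < t < 1 the twelve pairs of positive-octet hyperplanes of the deformed configuration that were tangent in the 24-cell now intersect, at the angle θ with cos θ = (3t² - 1)/(1 + t²) (Proposition 6.2). -/

import Mathlib

/-- The Minkowski inner product on `ℝ^{1,4}`, identified with `Fin 5 → ℝ`. -/
noncomputable def mink (v w : Fin 5 → ℝ) : ℝ :=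
  -(v 0 * w 0) + v 1 * w 1 + v 2 * w 2 + v 3 * w 3 + v 4 * w 4

/-- The positive octet space-like vectors of the deformed 24-cell (Table 6.1). -/
noncomputable def Pvec (t : ℝ) (ε : Fin 3 → ℝ) : Fin 5 → ℝ :=
  ![Real.sqrt 2, ε 0, ε 1, ε 2, (ε 0 * ε 1 * ε 2) / t]

/-- The negative octet space-like vectors of the deformed 24-cell (Table 6.1). -/
noncomputable def Nvec (t : ℝ) (ε : Fin 3 → ℝ) : Fin 5 → ℝ :=
  ![Real.sqrt 2, ε 0, ε 1, ε 2, -((ε 0 * ε 1 * ε 2) * t)]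

lemma card3 (P : Fin 3 → Prop) [DecidablePred P] :
    Nat.card {i // P i} =
      (if P 0 then 1 else 0) + (if P 1 then 1 else 0) + (if P 2 then 1 else 0) := by
  rw [Nat.card_eq_fintype_card, Fintype.card_subtype, Finset.card_filter,
    Fin.sum_univ_three]

lemma main_calc (t : ℝ) (ht : 0 < t) (ε ε' : Fin 3 → ℝ)
    (h1 : ε 0 * ε' 0 + ε 1 * ε' 1 + ε 2 * ε' 2 = -1)
    (hp : (ε 0 * ε 1 * ε 2) * (ε' 0 * ε' 1 * ε' 2) = 1)
    (hq : (ε 0 * ε 1 * ε 2) ^ 2 = 1) (hq' : (ε' 0 * ε' 1 * ε' 2) ^ 2 = 1)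
    (hs0 : ε 0 ^ 2 = 1) (hs1 : ε 1 ^ 2 = 1) (hs2 : ε 2 ^ 2 = 1)
    (hs0' : ε' 0 ^ 2 = 1) (hs1' : ε' 1 ^ 2 = 1) (hs2' : ε' 2 ^ 2 = 1) :
    -mink (Pvec t ε) (Pvec t ε') /
      Real.sqrt (mink (Pvec t ε) (Pvec t ε) * mink (Pvec t ε') (Pvec t ε')) =
      (3 * t ^ 2 - 1) / (1 + t ^ 2) := by
  have ht' : t ≠ 0 := ne_of_gt ht
  have h2 : Real.sqrt 2 * Real.sqrt 2 = 2 := Real.mul_self_sqrt (by norm_num)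
  have hA : mink (Pvec t ε) (Pvec t ε) = (1 + t ^ 2) / t ^ 2 := by
    simp only [mink, Pvec, Matrix.cons_val_zero, Matrix.cons_val_one, Matrix.head_cons,
      Matrix.cons_val_two, Matrix.tail_cons, Matrix.cons_val_three, Matrix.cons_val_four]
    rw [h2]
    field_simp
    linear_combination t^2*hs0 + t^2*hs1 + t^2*hs2 + hq
  have hB : mink (Pvec t ε') (Pvec t ε') = (1 + t ^ 2) / t ^ 2 := by
    simp only [mink, Pvec, Matrix.cons_val_zero, Matrix.cons_val_one, Matrix.head_cons,
      Matrix.cons_val_two, Matrix.tail_cons, Matrix.cons_val_three, Matrix.cons_val_four]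
    rw [h2]
    field_simp
    linear_combination t^2*hs0' + t^2*hs1' + t^2*hs2' + hq'
  have hC : mink (Pvec t ε) (Pvec t ε') = (1 - 3 * t ^ 2) / t ^ 2 := by
    simp only [mink, Pvec, Matrix.cons_val_zero, Matrix.cons_val_one, Matrix.head_cons,
      Matrix.cons_val_two, Matrix.tail_cons, Matrix.cons_val_three, Matrix.cons_val_four]
    rw [h2]
    field_simp
    linear_combination t^2*h1 + hp
  rw [hA, hB, hC]
  have hpos : (0:ℝ) < (1 + t ^ 2) / t ^ 2 := by positivity
  rw [show (1 + t ^ 2) / t ^ 2 * ((1 + t ^ 2) / t ^ 2) = ((1 + t ^ 2) / t ^ 2) ^ 2 by ring,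
    Real.sqrt_sq hpos.le]
  field_simp
  ring

/-- Two positive-octet wall vectors whose sign vectors differ in exactly two coordinates
satisfy `-⟨q,q'⟩/√(⟨q,q⟩⟨q',q'⟩) = (3t² - 1)/(1 + t²)`: the corresponding hyperplanes,
tangent in the 24-cell, now intersect at the angle θ with cos θ = (3t²-1)/(1+t²). -/
theorem positive_pair_angle (t : ℝ) (ht : 0 < t)
    (ε ε' : Fin 3 → ℝ) (hε : ∀ i, ε i = -1 ∨ ε i = 1) (hε' : ∀ i, ε' i = -1 ∨ ε' i = 1)
    (hd : Nat.card {i : Fin 3 // ε i ≠ ε' i} = 2) :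
    -mink (Pvec t ε) (Pvec t ε') /
      Real.sqrt (mink (Pvec t ε) (Pvec t ε) * mink (Pvec t ε') (Pvec t ε')) =
      (3 * t ^ 2 - 1) / (1 + t ^ 2) := by
  classical
  rw [card3] at hd
  apply main_calc t ht ε ε' _ _ _ _ _ _ _ _ _ _ <;>
    rcases hε 0 with h0 | h0 <;> rcases hε 1 with h1 | h1 <;> rcases hε 2 with h2 | h2 <;>
    rcases hε' 0 with h0' | h0' <;> rcases hε' 1 with h1' | h1' <;> rcases hε' 2 with h2' | h2' <;>
    simp only [h0, h1, h2, h0', h1', h2'] at hd ⊢ <;> revert hd <;> norm_num
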